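/- Let α > 1, let A be a finite-valued Young function satisfying the ∇₂-condition near infinity, and let M be a Young function. If there exist λ₀ > 0 and δ > 0 such that ∫₀^δ s^{−1/α′} A⁻¹(Ψ_{λ₀}(s)) ds < ∞, then for every λ > 0 there exists δ > 0 such that ∫₀^δ s^{−1/α′} A⁻¹(Ψ_λ(s)) ds < ∞. -/

import Mathlib

open MeasureTheory Set Filter
open scoped ENNReal

/-- A finite-valued Young function: convex, vanishing at `0`, nonnegative on `[0,∞)`,
and not identically zero there. -/
structure IsYoung (A : ℝ → ℝ) : Prop where
  zero : A 0 = 0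
  nonneg : ∀ t, 0 ≤ t → 0 ≤ A t
  convex : ConvexOn ℝ (Set.Ici 0) A
  nontrivial : ∃ t, 0 < t ∧ 0 < A t

/-- The Young conjugate `Ã(x) = sup { x t − A(t) : t ≥ 0 }`, with values in `[0,∞]`. -/
noncomputable def conjE (A : ℝ → ℝ) (x : ℝ≥0∞) : ℝ≥0∞ :=
  ⨆ t : {t : ℝ // 0 ≤ t}, (x * ENNReal.ofReal t.1 - ENNReal.ofReal (A t.1))

/-- The generalized right-continuous inverse `F⁻¹(t) = inf { s ≥ 0 : F(s) > t }`. -/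
noncomputable def rcInv (F : ℝ → ℝ) (t : ℝ) : ℝ :=
  sInf {s : ℝ | 0 ≤ s ∧ t < F s}

/-- The generalized right-continuous inverse of a Young function, acting on `[0,∞]`:
`A⁻¹(t) = inf { x ≥ 0 : A(x) > t }` (with `inf ∅ = ∞`). -/
noncomputable def einv (A : ℝ → ℝ) (t : ℝ≥0∞) : ℝ≥0∞ :=
  sInf {x : ℝ≥0∞ | t < ENNReal.ofReal (A x.toReal)}

/-- `Ψ_λ(s) = (1/s) [ ∫₀^s Ã(λ r^{1/α} M⁻¹(1/r)) dr + ∫_s^∞ Ã(λ r^{−1/α′} s M⁻¹(1/s)) dr ]`. -/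
noncomputable def Psi (A M : ℝ → ℝ) (a lam s : ℝ) : ℝ≥0∞ :=
  (ENNReal.ofReal s)⁻¹ *
    ((∫⁻ r in Set.Ioc 0 s, conjE A (ENNReal.ofReal (lam * r ^ (1/a) * rcInv M (1/r)))) +
     (∫⁻ r in Set.Ioi s, conjE A (ENNReal.ofReal (lam * r ^ (-((a-1)/a)) * s * rcInv M (1/s)))))

/-- `Φ_λ(s) = s A⁻¹(Ψ_λ(s))`. -/
noncomputable def Phi (A M : ℝ → ℝ) (a lam s : ℝ) : ℝ≥0∞ :=
  ENNReal.ofReal s * einv A (Psi A M a lam s)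

/-- Condition (M): for every `λ > 0` there is `δ > 0` with
`∫₀^δ s^{−1/α′} A⁻¹(Ψ_λ(s)) ds < ∞`. -/
def CondM (A M : ℝ → ℝ) (a : ℝ) : Prop :=
  ∀ lam > (0:ℝ), ∃ δ > (0:ℝ),
    (∫⁻ s in Set.Ioc (0:ℝ) δ,
      ENNReal.ofReal (s ^ (-((a-1)/a))) * einv A (Psi A M a lam s)) < ⊤

/-- `A` satisfies the `∇₂`-condition near infinity. -/
def Nabla2NearInfinity (A : ℝ → ℝ) : Prop :=
  ∃ c > (2:ℝ), ∃ t₀ ≥ (0:ℝ), ∀ t ≥ t₀, c * A t ≤ A (2 * t)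

section Aux
variable {A M : ℝ → ℝ}

lemma conjE_mono (A : ℝ → ℝ) : Monotone (conjE A) := fun x y h =>
  iSup_mono fun t => tsub_le_tsub_right (mul_le_mul_left h _) _

lemma le_conjE (A : ℝ → ℝ) (x : ℝ≥0∞) {t : ℝ} (ht : 0 ≤ t) :
    x * ENNReal.ofReal t - ENNReal.ofReal (A t) ≤ conjE A x :=
  le_iSup (fun t : {t : ℝ // 0 ≤ t} => x * ENNReal.ofReal t.1 - ENNReal.ofReal (A t.1)) ⟨t, ht⟩

lemma rcInv_nonneg (F : ℝ → ℝ) (t : ℝ) : 0 ≤ rcInv F t :=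
  Real.sInf_nonneg fun _ hx => hx.1

lemma young_mono (hA : IsYoung A) : MonotoneOn A (Set.Ici 0) := by
  intro x hx y hy hxy
  rcases eq_or_lt_of_le (Set.mem_Ici.mp hy) with h0 | h0
  · have : x = 0 := le_antisymm (by simpa [← h0] using hxy) hx
    simp [this, ← h0]
  · have hb0 : 0 ≤ x / y := div_nonneg hx h0.le
    have hb1 : x / y ≤ 1 := div_le_one_of_le₀ hxy h0.le
    have := hA.convex.2 (self_mem_Ici) (hy : y ∈ Set.Ici 0)
      (by linarith : (0:ℝ) ≤ 1 - x / y) hb0 (by ring)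
    simp only [smul_eq_mul, mul_zero, zero_add, hA.zero, mul_zero] at this
    rw [div_mul_cancel₀ _ h0.ne'] at this
    calc A x ≤ x / y * A y := this
    _ ≤ 1 * A y := mul_le_mul_of_nonneg_right hb1 (hA.nonneg y hy)
    _ = A y := one_mul _

lemma young_superhom (hA : IsYoung A) {γ t : ℝ} (hγ : 1 ≤ γ) (ht : 0 ≤ t) :
    γ * A t ≤ A (γ * t) := by
  have hγ0 : 0 < γ := lt_of_lt_of_le one_pos hγ
  have hmem : γ * t ∈ Set.Ici (0:ℝ) := mul_nonneg hγ0.le ht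
  have := hA.convex.2 (self_mem_Ici) hmem
    (by
      have : (1:ℝ)/γ ≤ 1 := div_le_one_of_le₀ hγ hγ0.le
      linarith : (0:ℝ) ≤ 1 - 1/γ) (by positivity : (0:ℝ) ≤ 1/γ) (by ring)
  simp only [smul_eq_mul, mul_zero, zero_add, hA.zero] at this
  have ht' : 1/γ * (γ * t) = t := by field_simp
  rw [ht'] at this
  calc γ * A t ≤ γ * (1/γ * A (γ * t)) := by
        apply mul_le_mul_of_nonneg_left _ hγ0.le
        simpa using this
  _ = A (γ * t) := by field_simp

end Aux

section Aux2
variable {A M : ℝ → ℝ}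

lemma young_unbounded (hA : IsYoung A) (hn : Nabla2NearInfinity A) (b : ℝ) :
    ∃ t, 0 ≤ t ∧ b < A t := by
  obtain ⟨c, hc, t₀, ht₀, H⟩ := hn
  obtain ⟨t₁, ht₁, hA₁⟩ := hA.nontrivial
  set T := max t₁ t₀ with hT
  have hT0 : 0 ≤ T := le_trans ht₁.le (le_max_left _ _)
  have hTt₀ : t₀ ≤ T := le_max_right _ _
  have hAT : 0 < A T := lt_of_lt_of_le hA₁
    (young_mono hA (Set.mem_Ici.2 ht₁.le) (Set.mem_Ici.2 hT0) (le_max_left _ _))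
  have key : ∀ n : ℕ, c ^ n * A T ≤ A (2 ^ n * T) ∧ t₀ ≤ 2 ^ n * T := by
    intro n
    induction n with
    | zero => simpa using hTt₀
    | succ n ih =>
      constructor
      · have h1 := H (2 ^ n * T) ih.2
        calc c ^ (n+1) * A T = c * (c ^ n * A T) := by ring
        _ ≤ c * A (2 ^ n * T) := by
            apply mul_le_mul_of_nonneg_left ih.1 (by linarith)
        _ ≤ A (2 * (2 ^ n * T)) := h1
        _ = A (2 ^ (n+1) * T) := by ring_nf
      · have h2 : (2:ℝ) ^ n ≤ 2 ^ (n+1) := by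
          rw [pow_succ]
          nlinarith [pow_pos (by norm_num : (0:ℝ) < 2) n]
        exact le_trans ih.2 (mul_le_mul_of_nonneg_right h2 hT0)
  obtain ⟨n, hn'⟩ := pow_unbounded_of_one_lt (b / A T) (by linarith : (1:ℝ) < c)
  refine ⟨2 ^ n * T, by positivity, ?_⟩
  have := (key n).1
  have : b / A T * A T < c ^ n * A T := by
    apply mul_lt_mul_of_pos_right hn' hAT
  rw [div_mul_cancel₀ _ hAT.ne'] at this
  linarith [(key n).1]

lemma conjE_double_le (hA : IsYoung A) {c t₀ : ℝ} (hc : 2 < c) (ht₀ : 0 ≤ t₀)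
    (H : ∀ t ≥ t₀, c * A t ≤ A (2 * t)) (x : ℝ≥0∞) :
    conjE A (ENNReal.ofReal (c/2) * x)
      ≤ ENNReal.ofReal c * conjE A x + ENNReal.ofReal (c * A (2*t₀)) := by
  rw [conjE]
  apply iSup_le
  rintro ⟨t, ht⟩
  rw [tsub_le_iff_right]
  have hc0 : (0:ℝ) < c := by linarith
  by_cases htt : t ≤ 2 * t₀
  · -- small t
    have key : x * ENNReal.ofReal (2*t₀) ≤ conjE A x + ENNReal.ofReal (A (2*t₀)) :=
      tsub_le_iff_right.mp (le_conjE A x (by positivity))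
    have step1 : ENNReal.ofReal (c/2) * x * ENNReal.ofReal t
        ≤ ENNReal.ofReal c * (x * ENNReal.ofReal (2*t₀)) := by
      calc ENNReal.ofReal (c/2) * x * ENNReal.ofReal t
          = x * (ENNReal.ofReal (c/2) * ENNReal.ofReal t) := by ring
      _ ≤ x * (ENNReal.ofReal c * ENNReal.ofReal (2*t₀)) := by
          apply mul_le_mul_right
          rw [← ENNReal.ofReal_mul (by positivity), ← ENNReal.ofReal_mul hc0.le]
          exact ENNReal.ofReal_le_ofReal (by nlinarith)
      _ = ENNReal.ofReal c * (x * ENNReal.ofReal (2*t₀)) := by ring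
    calc ENNReal.ofReal (c/2) * x * ENNReal.ofReal t
        ≤ ENNReal.ofReal c * (conjE A x + ENNReal.ofReal (A (2*t₀))) :=
          le_trans step1 (mul_le_mul_right key _)
    _ = ENNReal.ofReal c * conjE A x + ENNReal.ofReal c * ENNReal.ofReal (A (2*t₀)) := by
          rw [mul_add]
    _ = ENNReal.ofReal c * conjE A x + ENNReal.ofReal (c * A (2*t₀)) := by
          rw [← ENNReal.ofReal_mul hc0.le]
    _ ≤ ENNReal.ofReal c * conjE A x + ENNReal.ofReal (c * A (2*t₀)) + ENNReal.ofReal (A t) :=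
          le_self_add
  · -- large t : t/2 ≥ t₀
    push_neg at htt
    set u := t / 2 with hu
    have hu0 : 0 ≤ u := by positivity
    have hut₀ : t₀ ≤ u := by rw [hu]; linarith
    have hAu : 0 ≤ A u := hA.nonneg u hu0
    have hct : c * A u ≤ A t := by
      have := H u hut₀
      rwa [show 2 * u = t by rw [hu]; ring] at this
    have key : x * ENNReal.ofReal u ≤ conjE A x + ENNReal.ofReal (A u) :=
      tsub_le_iff_right.mp (le_conjE A x hu0)
    have lhs_eq : ENNReal.ofReal (c/2) * x * ENNReal.ofReal t
        = ENNReal.ofReal c * (x * ENNReal.ofReal u) := by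
      calc ENNReal.ofReal (c/2) * x * ENNReal.ofReal t
          = x * (ENNReal.ofReal (c/2) * ENNReal.ofReal t) := by ring
      _ = x * (ENNReal.ofReal c * ENNReal.ofReal u) := by
          rw [← ENNReal.ofReal_mul (by positivity), ← ENNReal.ofReal_mul hc0.le]
          congr 1
          rw [hu]; ring
      _ = ENNReal.ofReal c * (x * ENNReal.ofReal u) := by ring
    calc ENNReal.ofReal (c/2) * x * ENNReal.ofReal t
        = ENNReal.ofReal c * (x * ENNReal.ofReal u) := lhs_eq
    _ ≤ ENNReal.ofReal c * (conjE A x + ENNReal.ofReal (A u)) := mul_le_mul_right key _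
    _ = ENNReal.ofReal c * conjE A x + ENNReal.ofReal (c * A u) := by
          rw [mul_add, ← ENNReal.ofReal_mul hc0.le]
    _ ≤ ENNReal.ofReal c * conjE A x + ENNReal.ofReal (A t) := by
          exact add_le_add_right (ENNReal.ofReal_le_ofReal hct) _
    _ ≤ ENNReal.ofReal c * conjE A x + ENNReal.ofReal (c * A (2*t₀)) + ENNReal.ofReal (A t) := by
          rw [add_assoc, add_comm (ENNReal.ofReal (c * A (2*t₀)))]
          exact add_le_add_right le_self_add _

lemma conjE_scale (hA : IsYoung A) (hn : Nabla2NearInfinity A) {k : ℝ} (hk : 1 ≤ k) :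
    ∃ C ≥ (1:ℝ), ∃ KK ≥ (0:ℝ), ∀ x : ℝ≥0∞,
      conjE A (ENNReal.ofReal k * x) ≤ ENNReal.ofReal C * conjE A x + ENNReal.ofReal KK := by
  obtain ⟨c, hc, t₀, ht₀, H⟩ := hn
  have hβ : (1:ℝ) < c / 2 := by linarith
  have hc0 : (0:ℝ) < c := by linarith
  have hK0 : 0 ≤ c * A (2*t₀) := mul_nonneg hc0.le (hA.nonneg _ (by linarith))
  have main : ∀ n : ℕ, ∃ C ≥ (1:ℝ), ∃ KK ≥ (0:ℝ), ∀ x : ℝ≥0∞,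
      conjE A (ENNReal.ofReal ((c/2) ^ n) * x)
        ≤ ENNReal.ofReal C * conjE A x + ENNReal.ofReal KK := by
    intro n
    induction n with
    | zero =>
      exact ⟨1, le_rfl, 0, le_rfl, fun x => by simp⟩
    | succ n ih =>
      obtain ⟨C, hC, KK, hKK, ihx⟩ := ih
      refine ⟨c * C, by nlinarith, c * KK + c * A (2*t₀), by nlinarith, fun x => ?_⟩
      have e1 : ENNReal.ofReal ((c/2) ^ (n+1)) * x
          = ENNReal.ofReal (c/2) * (ENNReal.ofReal ((c/2) ^ n) * x) := by
        rw [← mul_assoc, ← ENNReal.ofReal_mul (by positivity)]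
        congr 2
        ring
      rw [e1]
      calc conjE A (ENNReal.ofReal (c/2) * (ENNReal.ofReal ((c/2) ^ n) * x))
          ≤ ENNReal.ofReal c * conjE A (ENNReal.ofReal ((c/2) ^ n) * x)
            + ENNReal.ofReal (c * A (2*t₀)) := conjE_double_le hA hc ht₀ H _
      _ ≤ ENNReal.ofReal c * (ENNReal.ofReal C * conjE A x + ENNReal.ofReal KK)
            + ENNReal.ofReal (c * A (2*t₀)) := by
            exact add_le_add_left (mul_le_mul_right (ihx x) _) _
      _ = ENNReal.ofReal (c * C) * conjE A x + ENNReal.ofReal (c * KK + c * A (2*t₀)) := by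
            rw [mul_add, ← mul_assoc, ← ENNReal.ofReal_mul hc0.le, ← ENNReal.ofReal_mul hc0.le,
              ENNReal.ofReal_add (by positivity) hK0, add_assoc]
  obtain ⟨n, hkn⟩ := pow_unbounded_of_one_lt k hβ
  obtain ⟨C, hC, KK, hKK, hx⟩ := main n
  refine ⟨C, hC, KK, hKK, fun x => ?_⟩
  refine le_trans (conjE_mono A (mul_le_mul_left (ENNReal.ofReal_le_ofReal hkn.le) x)) (hx x)

end Aux2

section Aux3
variable {A M : ℝ → ℝ}

lemma einv_mono (A : ℝ → ℝ) : Monotone (einv A) := fun u v h =>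
  sInf_le_sInf fun x hx => lt_of_le_of_lt h hx

lemma einv_scale (hA : IsYoung A) {γ : ℝ} (hγ : 1 ≤ γ) (u : ℝ≥0∞) :
    einv A (ENNReal.ofReal γ * u) ≤ ENNReal.ofReal γ * einv A u := by
  set g := ENNReal.ofReal γ with hg
  have hγ0 : (0:ℝ) < γ := lt_of_lt_of_le one_pos hγ
  have hg0 : g ≠ 0 := by simp [hg, ENNReal.ofReal_pos.2 hγ0, ne_of_gt]
  have hgt : g ≠ ⊤ := ENNReal.ofReal_ne_top
  have hmem : ∀ x ∈ {x : ℝ≥0∞ | u < ENNReal.ofReal (A x.toReal)},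
      g * x ∈ {x : ℝ≥0∞ | g * u < ENNReal.ofReal (A x.toReal)} := by
    intro x hx
    simp only [Set.mem_setOf_eq] at hx ⊢
    have hxt : x ≠ ⊤ := by
      intro h
      rw [h] at hx
      simp [hA.zero] at hx
    have htr : (g * x).toReal = γ * x.toReal := by
      rw [ENNReal.toReal_mul, hg, ENNReal.toReal_ofReal hγ0.le]
    rw [htr]
    calc g * u < g * ENNReal.ofReal (A x.toReal) := by
          exact (ENNReal.mul_lt_mul_iff_right hg0 hgt).2 hx
    _ = ENNReal.ofReal (γ * A x.toReal) := by
          rw [hg, ← ENNReal.ofReal_mul hγ0.le]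
    _ ≤ ENNReal.ofReal (A (γ * x.toReal)) :=
          ENNReal.ofReal_le_ofReal (young_superhom hA hγ ENNReal.toReal_nonneg)
  rw [einv, einv]
  have step : sInf {x : ℝ≥0∞ | g * u < ENNReal.ofReal (A x.toReal)} / g
      ≤ sInf {x : ℝ≥0∞ | u < ENNReal.ofReal (A x.toReal)} := by
    apply le_sInf
    intro x hx
    rw [ENNReal.div_le_iff hg0 hgt]
    calc sInf {x : ℝ≥0∞ | g * u < ENNReal.ofReal (A x.toReal)} ≤ g * x := sInf_le (hmem x hx)
    _ = x * g := mul_comm _ _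
  calc sInf {x : ℝ≥0∞ | g * u < ENNReal.ofReal (A x.toReal)}
      = sInf {x : ℝ≥0∞ | g * u < ENNReal.ofReal (A x.toReal)} / g * g := by
        rw [ENNReal.div_mul_cancel hg0 hgt]
  _ ≤ sInf {x : ℝ≥0∞ | u < ENNReal.ofReal (A x.toReal)} * g :=
        mul_le_mul_left step g
  _ = g * sInf {x : ℝ≥0∞ | u < ENNReal.ofReal (A x.toReal)} := mul_comm _ _

lemma einv_lt_top (hA : IsYoung A) (hn : Nabla2NearInfinity A) {u : ℝ≥0∞} (hu : u ≠ ⊤) :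
    einv A u < ⊤ := by
  obtain ⟨t, ht0, htb⟩ := young_unbounded hA hn u.toReal
  have hmem : (ENNReal.ofReal t) ∈ {x : ℝ≥0∞ | u < ENNReal.ofReal (A x.toReal)} := by
    simp only [Set.mem_setOf_eq, ENNReal.toReal_ofReal ht0]
    conv_lhs => rw [← ENNReal.ofReal_toReal hu]
    exact (ENNReal.ofReal_lt_ofReal_iff_of_nonneg ENNReal.toReal_nonneg).2 htb
  exact lt_of_le_of_lt (sInf_le hmem) (by simp [lt_top_iff_ne_top])

lemma lintegral_Ioi_comp_div (g : ℝ → ℝ≥0∞) {K s : ℝ} (hK : 0 < K) :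
    ∫⁻ r in Set.Ioi s, g (r / K) = ENNReal.ofReal K * ∫⁻ u in Set.Ioi (s / K), g u := by
  set e : ℝ ≃ᵐ ℝ := MeasurableEquiv.mulLeft₀ K hK.ne'
  have he : ∀ x : ℝ, e x = K * x := fun x => rfl
  have hpre : e ⁻¹' (Set.Ioi s) = Set.Ioi (s / K) := by
    ext x
    simp only [Set.mem_preimage, Set.mem_Ioi, he]
    rw [div_lt_iff₀ hK]
    constructor
    · intro h; linarith [h]
    · intro h; linarith [h]
  have key : ∫⁻ u in Set.Ioi (s / K), g u
      = ENNReal.ofReal K⁻¹ * ∫⁻ r in Set.Ioi s, g (r / K) := by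
    have h1 : ∫⁻ u in Set.Ioi (s / K), g u
        = ∫⁻ u, (fun r => g (r / K)) (e u) ∂(volume.restrict (Set.Ioi (s / K))) := by
      apply lintegral_congr
      intro u
      simp only [he]
      rw [mul_comm, mul_div_assoc, div_self hK.ne', mul_one]
    rw [h1, ← MeasureTheory.lintegral_map_equiv (fun r => g (r / K)) e]
    have h2 : Measure.map e (volume.restrict (Set.Ioi (s / K)))
        = (Measure.map e volume).restrict (Set.Ioi s) := by
      rw [MeasurableEquiv.restrict_map e volume (Set.Ioi s), hpre]
    rw [h2]
    have h3 : (Measure.map e volume : Measure ℝ) = ENNReal.ofReal |K⁻¹| • volume := by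
      have : (⇑e : ℝ → ℝ) = (K * ·) := by funext x; exact he x
      rw [this]
      exact Real.map_volume_mul_left hK.ne'
    rw [h3, Measure.restrict_smul, lintegral_smul_measure, abs_of_pos (by positivity), smul_eq_mul]
  rw [key, ← mul_assoc, ← ENNReal.ofReal_mul hK.le, mul_inv_cancel₀ hK.ne', ENNReal.ofReal_one,
    one_mul]

end Aux3


section Aux4
variable {A M : ℝ → ℝ}

lemma Psi_scale_le (hA : IsYoung A) (hn : Nabla2NearInfinity A) {a lam₀ k : ℝ}
    (ha : 1 < a) (hlam₀ : 0 < lam₀) (hk : 1 ≤ k) :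
    ∃ B ≥ (1:ℝ), ∃ KK ≥ (0:ℝ), ∀ s : ℝ, 0 < s →
      Psi A M a (k * lam₀) s ≤ ENNReal.ofReal B * Psi A M a lam₀ s + ENNReal.ofReal KK := by
  obtain ⟨C₁, hC₁, K₁, hK₁, H₁⟩ := conjE_scale hA hn hk
  obtain ⟨C₂, hC₂, K₂, hK₂, H₂⟩ := conjE_scale hA hn (k := 2*k) (by linarith)
  have hk0 : (0:ℝ) < k := lt_of_lt_of_le one_pos hk
  set p : ℝ := (a-1)/a with hpdef
  have hp0 : 0 < p := div_pos (by linarith) (by linarith)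
  have hp1 : p < 1 := by
    rw [hpdef, div_lt_one (by linarith)]
    linarith
  set KR : ℝ := k ^ (1/p) with hKRdef
  have hKR1 : 1 ≤ KR := by
    rw [hKRdef, show (1:ℝ) = k ^ (0:ℝ) by rw [Real.rpow_zero]]
    exact Real.rpow_le_rpow_of_exponent_le hk (by positivity)
  have hKR0 : 0 < KR := lt_of_lt_of_le one_pos hKR1
  have hKRp : KR ^ p = k := by
    rw [hKRdef, ← Real.rpow_mul hk0.le, one_div_mul_cancel hp0.ne', Real.rpow_one]
  -- key rpow identity : for 0 < r, (r / KR) ^ (-p) = k * r ^ (-p)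
  have hdivpow : ∀ r : ℝ, 0 < r → (r / KR) ^ (-p) = k * r ^ (-p) := by
    intro r hr
    rw [Real.div_rpow hr.le hKR0.le, Real.rpow_neg hKR0.le, hKRp, div_eq_mul_inv, inv_inv,
      mul_comm]
  refine ⟨max C₁ (KR * (C₂ + 1)), le_trans hC₁ (le_max_left _ _), K₁ + KR * K₂,
    by positivity, fun s hs => ?_⟩
  set B : ℝ := max C₁ (KR * (C₂ + 1)) with hBdef
  have hBC₁ : C₁ ≤ B := le_max_left _ _
  have hBC₂ : KR * (C₂ + 1) ≤ B := le_max_right _ _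
  set Minv : ℝ := rcInv M (1/s) with hMinv
  have hMinv0 : 0 ≤ Minv := rcInv_nonneg M _
  set xs : ℝ := lam₀ * s ^ (-p) * s * Minv with hxs
  have hxs0 : 0 ≤ xs := by
    have h1 : 0 ≤ s ^ (-p) := Real.rpow_nonneg hs.le _
    positivity
  set I₁ : ℝ → ℝ≥0∞ := fun l => ∫⁻ r in Set.Ioc 0 s,
    conjE A (ENNReal.ofReal (l * r ^ (1/a) * rcInv M (1/r))) with hI₁
  set g : ℝ → ℝ≥0∞ := fun u => conjE A (ENNReal.ofReal (lam₀ * u ^ (-p) * s * Minv)) with hg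
  set I₂ : ℝ → ℝ≥0∞ := fun l => ∫⁻ r in Set.Ioi s,
    conjE A (ENNReal.ofReal (l * r ^ (-p) * s * Minv)) with hI₂
  -- Step A : bound on I₁ (k*lam₀)
  have hI1bound : I₁ (k * lam₀) ≤ ENNReal.ofReal C₁ * I₁ lam₀
      + ENNReal.ofReal K₁ * ENNReal.ofReal s := by
    have hb : ∀ r ∈ Set.Ioc (0:ℝ) s,
        conjE A (ENNReal.ofReal (k * lam₀ * r ^ (1/a) * rcInv M (1/r)))
          ≤ ENNReal.ofReal C₁ * conjE A (ENNReal.ofReal (lam₀ * r ^ (1/a) * rcInv M (1/r)))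
            + ENNReal.ofReal K₁ := by
      intro r hr
      have harg : k * lam₀ * r ^ (1/a) * rcInv M (1/r)
          = k * (lam₀ * r ^ (1/a) * rcInv M (1/r)) := by ring
      rw [harg, ENNReal.ofReal_mul hk0.le]
      exact H₁ _
    calc I₁ (k * lam₀)
        ≤ ∫⁻ r in Set.Ioc (0:ℝ) s,
            (ENNReal.ofReal C₁ * conjE A (ENNReal.ofReal (lam₀ * r ^ (1/a) * rcInv M (1/r)))
              + ENNReal.ofReal K₁) :=
          lintegral_mono_ae ((ae_restrict_iff' measurableSet_Ioc).2 (ae_of_all _ hb))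
    _ = ENNReal.ofReal C₁ * I₁ lam₀ + ENNReal.ofReal K₁ * volume (Set.Ioc (0:ℝ) s) := by
          rw [lintegral_add_right _ measurable_const, setLIntegral_const,
            lintegral_const_mul' _ _ ENNReal.ofReal_ne_top]
    _ ≤ ENNReal.ofReal C₁ * I₁ lam₀ + ENNReal.ofReal K₁ * ENNReal.ofReal s := by
          rw [Real.volume_Ioc, sub_zero]
  -- Step B : bound on I₂ (k*lam₀)
  have hB1 : I₂ (k * lam₀) = ∫⁻ r in Set.Ioi s, g (r / KR) := by
    apply setLIntegral_congr_fun measurableSet_Ioi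
    intro r hr
    have hr0 : 0 < r := lt_trans hs hr
    simp only [hg]
    rw [hdivpow r hr0]
    congr 2
    ring
  have hB2 : ∫⁻ r in Set.Ioi s, g (r / KR)
      = ENNReal.ofReal KR * ∫⁻ u in Set.Ioi (s / KR), g u :=
    lintegral_Ioi_comp_div g hKR0
  have hsplit : ∫⁻ u in Set.Ioi (s / KR), g u
      = (∫⁻ u in Set.Ioc (s / KR) s, g u) + ∫⁻ u in Set.Ioi s, g u := by
    rw [← Set.Ioc_union_Ioi_eq_Ioi (div_le_self hs.le hKR1),
      lintegral_union measurableSet_Ioi Set.Ioc_disjoint_Ioi_same]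
  -- B4 : bound on the Ioc part
  have hIoc : ∫⁻ u in Set.Ioc (s / KR) s, g u
      ≤ conjE A (ENNReal.ofReal (k * xs)) * ENNReal.ofReal s := by
    have hb : ∀ u ∈ Set.Ioc (s / KR) s, g u ≤ conjE A (ENNReal.ofReal (k * xs)) := by
      intro u hu
      have hu0 : 0 < u := lt_trans (by positivity) hu.1
      have hmono : u ^ (-p) ≤ (s / KR) ^ (-p) :=
        Real.rpow_le_rpow_of_nonpos (by positivity) hu.1.le (by linarith)
      have heq : (s / KR) ^ (-p) = k * s ^ (-p) := hdivpow s hs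
      have harg : lam₀ * u ^ (-p) * s * Minv ≤ k * xs := by
        rw [hxs]
        have h1 : lam₀ * u ^ (-p) * s * Minv ≤ lam₀ * (k * s ^ (-p)) * s * Minv := by
          rw [← heq]
          have := mul_le_mul_of_nonneg_left hmono hlam₀.le
          exact mul_le_mul_of_nonneg_right (mul_le_mul_of_nonneg_right this hs.le) hMinv0
        calc lam₀ * u ^ (-p) * s * Minv ≤ lam₀ * (k * s ^ (-p)) * s * Minv := h1
        _ = k * (lam₀ * s ^ (-p) * s * Minv) := by ring
      exact conjE_mono A (ENNReal.ofReal_le_ofReal harg)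
    calc ∫⁻ u in Set.Ioc (s / KR) s, g u
        ≤ ∫⁻ _ in Set.Ioc (s / KR) s, conjE A (ENNReal.ofReal (k * xs)) :=
          lintegral_mono_ae ((ae_restrict_iff' measurableSet_Ioc).2 (ae_of_all _ hb))
    _ = conjE A (ENNReal.ofReal (k * xs)) * volume (Set.Ioc (s / KR) s) := setLIntegral_const _ _
    _ ≤ conjE A (ENNReal.ofReal (k * xs)) * ENNReal.ofReal s := by
          apply mul_le_mul_right
          rw [Real.volume_Ioc]
          exact ENNReal.ofReal_le_ofReal (by
            have : 0 ≤ s / KR := by positivity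
            linarith)
  -- B5
  have hB5 : conjE A (ENNReal.ofReal (k * xs))
      ≤ ENNReal.ofReal C₂ * conjE A (ENNReal.ofReal (xs / 2)) + ENNReal.ofReal K₂ := by
    have : k * xs = (2 * k) * (xs / 2) := by ring
    rw [this, ENNReal.ofReal_mul (by linarith)]
    exact H₂ _
  -- B6
  have hB6 : conjE A (ENNReal.ofReal (xs / 2)) * ENNReal.ofReal s ≤ I₂ lam₀ := by
    have hb : ∀ r ∈ Set.Ioc s (2*s), conjE A (ENNReal.ofReal (xs / 2))
        ≤ conjE A (ENNReal.ofReal (lam₀ * r ^ (-p) * s * Minv)) := by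
      intro r hr
      have hr0 : 0 < r := lt_trans hs hr.1
      apply conjE_mono A
      apply ENNReal.ofReal_le_ofReal
      have h2p : (1:ℝ)/2 ≤ (2:ℝ) ^ (-p) := by
        rw [show (1:ℝ)/2 = (2:ℝ) ^ (-1 : ℝ) by rw [Real.rpow_neg_one]; norm_num]
        exact Real.rpow_le_rpow_of_exponent_le one_le_two (by linarith)
      have hrp : (2:ℝ) ^ (-p) * s ^ (-p) ≤ r ^ (-p) := by
        rw [← Real.mul_rpow (by norm_num) hs.le]
        exact Real.rpow_le_rpow_of_nonpos hr0 hr.2 (by linarith)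
      have : (1/2) * s ^ (-p) ≤ r ^ (-p) := by
        refine le_trans ?_ hrp
        exact mul_le_mul_of_nonneg_right h2p (Real.rpow_nonneg hs.le _)
      calc xs / 2 = lam₀ * ((1/2) * s ^ (-p)) * s * Minv := by rw [hxs]; ring
      _ ≤ lam₀ * r ^ (-p) * s * Minv := by
          have := mul_le_mul_of_nonneg_left this hlam₀.le
          exact mul_le_mul_of_nonneg_right (mul_le_mul_of_nonneg_right this hs.le) hMinv0
    calc conjE A (ENNReal.ofReal (xs / 2)) * ENNReal.ofReal s
        = conjE A (ENNReal.ofReal (xs / 2)) * volume (Set.Ioc s (2*s)) := by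
          rw [Real.volume_Ioc]
          congr 2
          ring
    _ = ∫⁻ _ in Set.Ioc s (2*s), conjE A (ENNReal.ofReal (xs / 2)) :=
          (setLIntegral_const _ _).symm
    _ ≤ ∫⁻ r in Set.Ioc s (2*s), conjE A (ENNReal.ofReal (lam₀ * r ^ (-p) * s * Minv)) :=
          lintegral_mono_ae ((ae_restrict_iff' measurableSet_Ioc).2 (ae_of_all _ hb))
    _ ≤ I₂ lam₀ := lintegral_mono_set (Set.Ioc_subset_Ioi_self)
  -- combine I₂ bound
  have hI2bound : I₂ (k * lam₀) ≤ ENNReal.ofReal (KR * (C₂ + 1)) * I₂ lam₀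
      + ENNReal.ofReal (KR * K₂) * ENNReal.ofReal s := by
    have hE : ∫⁻ u in Set.Ioc (s / KR) s, g u
        ≤ ENNReal.ofReal C₂ * I₂ lam₀ + ENNReal.ofReal K₂ * ENNReal.ofReal s := by
      calc ∫⁻ u in Set.Ioc (s / KR) s, g u
          ≤ conjE A (ENNReal.ofReal (k * xs)) * ENNReal.ofReal s := hIoc
      _ ≤ (ENNReal.ofReal C₂ * conjE A (ENNReal.ofReal (xs / 2)) + ENNReal.ofReal K₂)
            * ENNReal.ofReal s := mul_le_mul_left hB5 _
      _ = ENNReal.ofReal C₂ * (conjE A (ENNReal.ofReal (xs / 2)) * ENNReal.ofReal s)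
            + ENNReal.ofReal K₂ * ENNReal.ofReal s := by ring
      _ ≤ ENNReal.ofReal C₂ * I₂ lam₀ + ENNReal.ofReal K₂ * ENNReal.ofReal s := by
            exact add_le_add_left (mul_le_mul_right hB6 _) _
    calc I₂ (k * lam₀) = ENNReal.ofReal KR *
          ((∫⁻ u in Set.Ioc (s / KR) s, g u) + ∫⁻ u in Set.Ioi s, g u) := by
          rw [hB1, hB2, hsplit]
    _ ≤ ENNReal.ofReal KR *
          ((ENNReal.ofReal C₂ * I₂ lam₀ + ENNReal.ofReal K₂ * ENNReal.ofReal s) + I₂ lam₀) := by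
          apply mul_le_mul_right
          apply add_le_add hE
          apply le_of_eq
          rw [hI₂]
    _ = ENNReal.ofReal KR * (ENNReal.ofReal C₂ + 1) * I₂ lam₀
          + ENNReal.ofReal KR * ENNReal.ofReal K₂ * ENNReal.ofReal s := by ring
    _ = ENNReal.ofReal (KR * (C₂ + 1)) * I₂ lam₀
          + ENNReal.ofReal (KR * K₂) * ENNReal.ofReal s := by
          rw [ENNReal.ofReal_mul hKR0.le, ENNReal.ofReal_mul hKR0.le,
            ENNReal.ofReal_add (by linarith) zero_le_one, ENNReal.ofReal_one]
  -- final assembly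
  have hmain : I₁ (k * lam₀) + I₂ (k * lam₀)
      ≤ ENNReal.ofReal B * (I₁ lam₀ + I₂ lam₀)
        + ENNReal.ofReal (K₁ + KR * K₂) * ENNReal.ofReal s := by
    calc I₁ (k * lam₀) + I₂ (k * lam₀)
        ≤ (ENNReal.ofReal C₁ * I₁ lam₀ + ENNReal.ofReal K₁ * ENNReal.ofReal s)
          + (ENNReal.ofReal (KR * (C₂ + 1)) * I₂ lam₀
            + ENNReal.ofReal (KR * K₂) * ENNReal.ofReal s) := add_le_add hI1bound hI2bound
    _ ≤ (ENNReal.ofReal B * I₁ lam₀ + ENNReal.ofReal K₁ * ENNReal.ofReal s)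
          + (ENNReal.ofReal B * I₂ lam₀ + ENNReal.ofReal (KR * K₂) * ENNReal.ofReal s) := by
          gcongr <;> exact ENNReal.ofReal_le_ofReal (by assumption)
    _ = ENNReal.ofReal B * (I₁ lam₀ + I₂ lam₀)
          + (ENNReal.ofReal K₁ + ENNReal.ofReal (KR * K₂)) * ENNReal.ofReal s := by ring
    _ = ENNReal.ofReal B * (I₁ lam₀ + I₂ lam₀)
          + ENNReal.ofReal (K₁ + KR * K₂) * ENNReal.ofReal s := by
          rw [ENNReal.ofReal_add hK₁ (by positivity)]
  have hPsiL : Psi A M a (k * lam₀) s = (ENNReal.ofReal s)⁻¹ * (I₁ (k * lam₀) + I₂ (k * lam₀)) := by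
    rw [Psi, hI₁, hI₂, hMinv, hpdef]
  have hPsiR : Psi A M a lam₀ s = (ENNReal.ofReal s)⁻¹ * (I₁ lam₀ + I₂ lam₀) := by
    rw [Psi, hI₁, hI₂, hMinv, hpdef]
  have hsinv : (ENNReal.ofReal s)⁻¹ * ENNReal.ofReal s = 1 :=
    ENNReal.inv_mul_cancel (ENNReal.ofReal_pos.2 hs).ne' ENNReal.ofReal_ne_top
  calc Psi A M a (k * lam₀) s
      = (ENNReal.ofReal s)⁻¹ * (I₁ (k * lam₀) + I₂ (k * lam₀)) := hPsiL
  _ ≤ (ENNReal.ofReal s)⁻¹ * (ENNReal.ofReal B * (I₁ lam₀ + I₂ lam₀)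
        + ENNReal.ofReal (K₁ + KR * K₂) * ENNReal.ofReal s) := mul_le_mul_right hmain _
  _ = ENNReal.ofReal B * ((ENNReal.ofReal s)⁻¹ * (I₁ lam₀ + I₂ lam₀))
        + ENNReal.ofReal (K₁ + KR * K₂) * ((ENNReal.ofReal s)⁻¹ * ENNReal.ofReal s) := by ring
  _ = ENNReal.ofReal B * Psi A M a lam₀ s + ENNReal.ofReal (K₁ + KR * K₂) := by
        rw [hsinv, hPsiR, mul_one]

end Aux4

section Aux5
variable {A M : ℝ → ℝ}

lemma Psi_mono_lam {a lam lam' s : ℝ} (hlam : 0 ≤ lam) (hle : lam ≤ lam') (hs : 0 < s) :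
    Psi A M a lam s ≤ Psi A M a lam' s := by
  rw [Psi, Psi]
  apply mul_le_mul_right
  apply add_le_add
  · apply lintegral_mono_ae
    rw [ae_restrict_iff' measurableSet_Ioc]
    apply ae_of_all
    intro r hr
    apply conjE_mono A
    apply ENNReal.ofReal_le_ofReal
    have h1 : 0 ≤ r ^ (1/a) := Real.rpow_nonneg hr.1.le _
    have h2 : 0 ≤ rcInv M (1/r) := rcInv_nonneg M _
    exact mul_le_mul_of_nonneg_right (mul_le_mul_of_nonneg_right hle h1) h2
  · apply lintegral_mono_ae
    rw [ae_restrict_iff' measurableSet_Ioi]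
    apply ae_of_all
    intro r hr
    apply conjE_mono A
    apply ENNReal.ofReal_le_ofReal
    have hr0 : 0 < r := lt_trans hs hr
    have h1 : 0 ≤ r ^ (-((a-1)/a)) := Real.rpow_nonneg hr0.le _
    have h2 : 0 ≤ rcInv M (1/s) := rcInv_nonneg M _
    exact mul_le_mul_of_nonneg_right
      (mul_le_mul_of_nonneg_right (mul_le_mul_of_nonneg_right hle h1) hs.le) h2

theorem condM_independent_of_lambda'
    (a : ℝ) (ha : 1 < a) (A M : ℝ → ℝ) (hA : IsYoung A) (hM : IsYoung M)
    (hnabla : Nabla2NearInfinity A)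
    (hsome : ∃ lam₀ > (0:ℝ), ∃ δ > (0:ℝ),
      (∫⁻ s in Set.Ioc (0:ℝ) δ,
        ENNReal.ofReal (s ^ (-((a-1)/a))) * einv A (Psi A M a lam₀ s)) < ⊤) :
    ∀ lam > (0:ℝ), ∃ δ > (0:ℝ),
      (∫⁻ s in Set.Ioc (0:ℝ) δ,
        ENNReal.ofReal (s ^ (-((a-1)/a))) * einv A (Psi A M a lam s)) < ⊤ := by
  obtain ⟨lam₀, hlam₀, δ, hδ, hint⟩ := hsome
  intro lam hlam
  refine ⟨δ, hδ, ?_⟩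
  set k : ℝ := max (lam / lam₀) 1 with hkdef
  have hk : 1 ≤ k := le_max_right _ _
  have hlamle : lam ≤ k * lam₀ := by
    have h1 : lam / lam₀ ≤ k := le_max_left _ _
    calc lam = lam / lam₀ * lam₀ := (div_mul_cancel₀ _ hlam₀.ne').symm
    _ ≤ k * lam₀ := mul_le_mul_of_nonneg_right h1 hlam₀.le
  obtain ⟨B, hB, KK, hKK, HP⟩ := Psi_scale_le (M := M) hA hnabla ha hlam₀ hk
  set c₀ : ℝ≥0∞ := einv A (ENNReal.ofReal (2 * KK)) with hc₀def
  have hc₀ : c₀ < ⊤ := einv_lt_top hA hnabla ENNReal.ofReal_ne_top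
  have hptwise : ∀ s ∈ Set.Ioc (0:ℝ) δ,
      einv A (Psi A M a lam s)
        ≤ ENNReal.ofReal (2 * B) * einv A (Psi A M a lam₀ s) + c₀ := by
    intro s hs
    have h1 : Psi A M a lam s ≤ ENNReal.ofReal B * Psi A M a lam₀ s + ENNReal.ofReal KK :=
      le_trans (Psi_mono_lam hlam.le hlamle hs.1) (HP s hs.1)
    by_cases hcase : ENNReal.ofReal KK ≤ ENNReal.ofReal B * Psi A M a lam₀ s
    · have h2 : Psi A M a lam s ≤ ENNReal.ofReal (2 * B) * Psi A M a lam₀ s := by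
        calc Psi A M a lam s ≤ ENNReal.ofReal B * Psi A M a lam₀ s + ENNReal.ofReal KK := h1
        _ ≤ ENNReal.ofReal B * Psi A M a lam₀ s + ENNReal.ofReal B * Psi A M a lam₀ s :=
            add_le_add_right hcase _
        _ = ENNReal.ofReal (2 * B) * Psi A M a lam₀ s := by
            rw [show (2:ℝ) * B = B + B by ring, ENNReal.ofReal_add (by linarith) (by linarith),
              add_mul]
      calc einv A (Psi A M a lam s) ≤ einv A (ENNReal.ofReal (2 * B) * Psi A M a lam₀ s) :=
            einv_mono A h2
      _ ≤ ENNReal.ofReal (2 * B) * einv A (Psi A M a lam₀ s) :=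
            einv_scale hA (by linarith) _
      _ ≤ ENNReal.ofReal (2 * B) * einv A (Psi A M a lam₀ s) + c₀ := le_self_add
    · push_neg at hcase
      have h2 : Psi A M a lam s ≤ ENNReal.ofReal (2 * KK) := by
        calc Psi A M a lam s ≤ ENNReal.ofReal B * Psi A M a lam₀ s + ENNReal.ofReal KK := h1
        _ ≤ ENNReal.ofReal KK + ENNReal.ofReal KK := add_le_add_left hcase.le _
        _ = ENNReal.ofReal (2 * KK) := by
            rw [show (2:ℝ) * KK = KK + KK by ring, ENNReal.ofReal_add hKK hKK]
      calc einv A (Psi A M a lam s) ≤ c₀ := einv_mono A h2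
      _ ≤ ENNReal.ofReal (2 * B) * einv A (Psi A M a lam₀ s) + c₀ := le_add_self
  have hw : Measurable (fun s : ℝ => ENNReal.ofReal (s ^ (-((a-1)/a)))) := by
    measurability
  have hwint : (∫⁻ s in Set.Ioc (0:ℝ) δ, ENNReal.ofReal (s ^ (-((a-1)/a)))) < ⊤ := by
    have hp1 : (-1:ℝ) < -((a-1)/a) := by
      have : (a-1)/a < 1 := by
        rw [div_lt_one (by linarith)]
        linarith
      linarith
    have hii : IntervalIntegrable (fun s : ℝ => s ^ (-((a-1)/a))) volume 0 δ :=
      intervalIntegral.intervalIntegrable_rpow' hp1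
    rw [intervalIntegrable_iff_integrableOn_Ioc_of_le hδ.le] at hii
    exact hii.setLIntegral_lt_top
  calc (∫⁻ s in Set.Ioc (0:ℝ) δ,
        ENNReal.ofReal (s ^ (-((a-1)/a))) * einv A (Psi A M a lam s))
      ≤ ∫⁻ s in Set.Ioc (0:ℝ) δ,
          (ENNReal.ofReal (2 * B) * (ENNReal.ofReal (s ^ (-((a-1)/a)))
            * einv A (Psi A M a lam₀ s)) + c₀ * ENNReal.ofReal (s ^ (-((a-1)/a)))) := by
        apply lintegral_mono_ae
        rw [ae_restrict_iff' measurableSet_Ioc]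
        apply ae_of_all
        intro s hs
        calc ENNReal.ofReal (s ^ (-((a-1)/a))) * einv A (Psi A M a lam s)
            ≤ ENNReal.ofReal (s ^ (-((a-1)/a)))
              * (ENNReal.ofReal (2 * B) * einv A (Psi A M a lam₀ s) + c₀) :=
              mul_le_mul_right (hptwise s hs) _
        _ = ENNReal.ofReal (2 * B) * (ENNReal.ofReal (s ^ (-((a-1)/a)))
              * einv A (Psi A M a lam₀ s)) + c₀ * ENNReal.ofReal (s ^ (-((a-1)/a))) := by
              ring
  _ = ENNReal.ofReal (2 * B) * (∫⁻ s in Set.Ioc (0:ℝ) δ,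
        ENNReal.ofReal (s ^ (-((a-1)/a))) * einv A (Psi A M a lam₀ s))
      + c₀ * ∫⁻ s in Set.Ioc (0:ℝ) δ, ENNReal.ofReal (s ^ (-((a-1)/a))) := by
        rw [lintegral_add_right _ (hw.const_mul _),
          lintegral_const_mul' _ _ ENNReal.ofReal_ne_top,
          lintegral_const_mul' _ _ hc₀.ne]
  _ < ⊤ := by
        apply ENNReal.add_lt_top.2
        constructor
        · exact ENNReal.mul_lt_top ENNReal.ofReal_lt_top hint
        · exact ENNReal.mul_lt_top hc₀ hwint

end Aux5

theorem condM_independent_of_lambda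
    (a : ℝ) (ha : 1 < a) (A M : ℝ → ℝ) (hA : IsYoung A) (hM : IsYoung M)
    (hnabla : Nabla2NearInfinity A)
    (hsome : ∃ lam₀ > (0:ℝ), ∃ δ > (0:ℝ),
      (∫⁻ s in Set.Ioc (0:ℝ) δ,
        ENNReal.ofReal (s ^ (-((a-1)/a))) * einv A (Psi A M a lam₀ s)) < ⊤) :
    ∀ lam > (0:ℝ), ∃ δ > (0:ℝ),
      (∫⁻ s in Set.Ioc (0:ℝ) δ,
        ENNReal.ofReal (s ^ (-((a-1)/a))) * einv A (Psi A M a lam s)) < ⊤ := by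
  exact condM_independent_of_lambda' a ha A M hA hM hnabla hsome
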